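/- The quotient space D̃ is separable: there exists a countable set S of càdlàg functions [0,1] → ℝ^d such that for every càdlàg x : [0,1] → ℝ^d and every ε > 0 there is y ∈ S with d_{D̃}(x, y) < ε. -/

import Mathlib

open Filter Set Topology

/-- A function `f : ℝ → ℝ^d` is càdlàg on `[0,1]`: right-continuous at every point of
`[0,1)` and with left limits at every point of `(0,1]`. -/
def Cadlag {d : ℕ} (f : ℝ → EuclideanSpace ℝ (Fin d)) : Prop :=
  (∀ t ∈ Set.Ico (0 : ℝ) 1, Tendsto f (nhdsWithin t (Set.Ioi t)) (nhds (f t))) ∧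
  (∀ t ∈ Set.Ioc (0 : ℝ) 1, ∃ L, Tendsto f (nhdsWithin t (Set.Iio t)) (nhds L))

/-- The uniform (sup) distance over `[0,1]`: `‖x − y‖_∞ = sup_{t ∈ [0,1]} ‖x(t) − y(t)‖`. -/
noncomputable def unifDist {d : ℕ} (x y : ℝ → EuclideanSpace ℝ (Fin d)) : ℝ :=
  sSup {c : ℝ | ∃ t ∈ Set.Icc (0 : ℝ) 1, c = ‖x t - y t‖}

/-- A reparametrisation of `[0,1]`: a continuous strictly increasing bijection of `[0,1]`
onto itself. -/
def Reparam (l : ℝ → ℝ) : Prop :=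
  ContinuousOn l (Set.Icc 0 1) ∧ StrictMonoOn l (Set.Icc 0 1) ∧
    Set.BijOn l (Set.Icc 0 1) (Set.Icc 0 1)

/-- The pseudometric `d_{D̃}(x, y) = inf_λ ‖x∘λ − y‖_∞`, the infimum over all
reparametrisations `λ` of `[0,1]`. -/
noncomputable def dTilde {d : ℕ} (x y : ℝ → EuclideanSpace ℝ (Fin d)) : ℝ :=
  sInf {c : ℝ | ∃ l, Reparam l ∧ c = unifDist (x ∘ l) y}

/-! ### Auxiliary constructions -/

noncomputable def stepFun {d : ℕ} (n : ℕ) (v : ℕ → EuclideanSpace ℝ (Fin d))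
    (w : EuclideanSpace ℝ (Fin d)) : ℝ → EuclideanSpace ℝ (Fin d) :=
  fun u => if 1 ≤ u then w else v ⌊(n : ℝ) * u⌋₊

lemma stepFun_cadlag {d n : ℕ} (hn : 0 < n) (v : ℕ → EuclideanSpace ℝ (Fin d)) (w) :
    Cadlag (stepFun n v w) := by
  have hn' : (0:ℝ) < n := by exact_mod_cast hn
  constructor
  · intro t ht
    set j := ⌊(n:ℝ) * t⌋₊ with hj
    have ht' : t < ((j:ℝ)+1)/n := by
      rw [lt_div_iff₀ hn']
      have := Nat.lt_floor_add_one ((n:ℝ) * t)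
      nlinarith
    have hmem : Ioo t (min (((j:ℝ)+1)/n) 1) ∈ 𝓝[>] t :=
      Ioo_mem_nhdsGT_of_mem ⟨le_refl t, lt_min ht' ht.2⟩
    have heq : ∀ u ∈ Ioo t (min (((j:ℝ)+1)/n) 1), stepFun n v w u = stepFun n v w t := by
      intro u hu
      have hu1 : u < 1 := lt_of_lt_of_le hu.2 (min_le_right _ _)
      have hujn : u < ((j:ℝ)+1)/n := lt_of_lt_of_le hu.2 (min_le_left _ _)
      have hu0 : (0:ℝ) ≤ u := le_trans ht.1 hu.1.le
      have hfl : ⌊(n:ℝ) * u⌋₊ = j := by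
        rw [Nat.floor_eq_iff (mul_nonneg hn'.le hu0)]
        constructor
        · calc (j:ℝ) ≤ (n:ℝ) * t := Nat.floor_le (mul_nonneg hn'.le ht.1)
            _ ≤ (n:ℝ) * u := by nlinarith [hu.1]
        · have := (lt_div_iff₀ hn').mp hujn; nlinarith
      simp only [stepFun, if_neg (not_le.mpr hu1), if_neg (not_le.mpr ht.2), hfl]
      rfl
    exact Tendsto.congr' (eventuallyEq_of_mem hmem (fun u hu => (heq u hu).symm))
      tendsto_const_nhds
  · intro t ht
    set k := ⌈(n:ℝ) * t⌉₊ with hk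
    have hnt : (0:ℝ) < (n:ℝ) * t := mul_pos hn' ht.1
    have hk1 : 1 ≤ k := Nat.one_le_iff_ne_zero.mpr (by
      simp only [hk, ne_eq, Nat.ceil_eq_zero, not_le]; exact hnt)
    have hkc : ((k:ℝ) - 1) / n < t := by
      rw [div_lt_iff₀ hn']
      have := Nat.ceil_lt_add_one hnt.le
      nlinarith
    refine ⟨v (k - 1), ?_⟩
    have hmem : Ioo (((k:ℝ)-1)/n) t ∈ 𝓝[<] t :=
      Ioo_mem_nhdsLT_of_mem ⟨hkc, le_refl t⟩
    have heq : ∀ u ∈ Ioo (((k:ℝ)-1)/n) t, stepFun n v w u = v (k-1) := by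
      intro u hu
      have hu1 : u < 1 := lt_of_lt_of_le hu.2 ht.2
      have hc0 : (0:ℝ) ≤ ((k:ℝ)-1)/n := by
        apply div_nonneg _ hn'.le
        have : (1:ℝ) ≤ k := by exact_mod_cast hk1
        linarith
      have hu0 : 0 ≤ u := le_trans hc0 hu.1.le
      have hcast : ((k - 1 : ℕ) : ℝ) = (k:ℝ) - 1 := by
        push_cast [Nat.cast_sub hk1]; ring
      have hfl : ⌊(n:ℝ) * u⌋₊ = k - 1 := by
        rw [Nat.floor_eq_iff (mul_nonneg hn'.le hu0)]
        constructor
        · rw [hcast]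
          have := (div_lt_iff₀ hn').mp hu.1
          nlinarith
        · rw [hcast]
          have h1 : (n:ℝ) * u < (n:ℝ) * t := mul_lt_mul_of_pos_left hu.2 hn'
          have h2 : (n:ℝ) * t ≤ k := Nat.le_ceil _
          linarith
      simp only [stepFun, if_neg (not_le.mpr hu1), hfl]
    exact Tendsto.congr' (eventuallyEq_of_mem hmem (fun u hu => (heq u hu).symm))
      tendsto_const_nhds

lemma stepFun_eval {d n : ℕ} (hn : 0 < n) (v : ℕ → EuclideanSpace ℝ (Fin d)) (w)
    {j : ℕ} (hj : j < n) {s : ℝ} (hs : s ∈ Ico ((j:ℝ)/n) (((j:ℝ)+1)/n)) :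
    stepFun n v w s = v j := by
  have hn' : (0:ℝ) < n := by exact_mod_cast hn
  have hs1 : s < 1 := by
    have : ((j:ℝ)+1)/n ≤ 1 := by
      rw [div_le_one hn']
      exact_mod_cast hj
    linarith [hs.2]
  have hs0 : 0 ≤ s := le_trans (by positivity) hs.1
  have hfl : ⌊(n:ℝ) * s⌋₊ = j := by
    rw [Nat.floor_eq_iff (mul_nonneg hn'.le hs0)]
    constructor
    · have := (div_le_iff₀ hn').mp hs.1; nlinarith
    · have := (lt_div_iff₀ hn').mp hs.2; nlinarith
  simp only [stepFun, if_neg (not_le.mpr hs1), hfl]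

lemma stepFun_one {d n : ℕ} (v : ℕ → EuclideanSpace ℝ (Fin d)) (w) :
    stepFun n v w 1 = w := by simp [stepFun]

lemma stepFun_congr {d n : ℕ} (hn : 0 < n) {v v' : ℕ → EuclideanSpace ℝ (Fin d)} (w)
    (h : ∀ j < n, v j = v' j) : stepFun n v w = stepFun n v' w := by
  have hn' : (0:ℝ) < n := by exact_mod_cast hn
  funext u
  simp only [stepFun]
  split
  · rfl
  · rename_i hu
    push_neg at hu
    have hlt : ⌊(n:ℝ) * u⌋₊ < n := by
      rcases le_or_gt 0 u with h0 | h0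
      · rw [Nat.floor_lt (mul_nonneg hn'.le h0)]
        nlinarith
      · have : ⌊(n:ℝ) * u⌋₊ = 0 := Nat.floor_eq_zero.mpr (by nlinarith)
        rw [this]; exact hn
    rw [h _ hlt]

noncomputable def plFun (n : ℕ) (t : ℕ → ℝ) : ℝ → ℝ :=
  fun u => ∑ j ∈ Finset.range n,
    (t (j+1) - t j) * ((n:ℝ) * (min (((j:ℝ)+1)/n) (max ((j:ℝ)/n) u) - (j:ℝ)/n))

section pl
variable {n : ℕ} {t : ℕ → ℝ}

lemma plFun_continuous : Continuous (plFun n t) := by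
  apply continuous_finset_sum
  intro j _
  exact continuous_const.mul (continuous_const.mul
    ((continuous_const.min (continuous_const.max continuous_id)).sub continuous_const))

variable (hn : 0 < n) (ht0 : t 0 = 0) (hmono : ∀ j < n, t j < t (j+1))

include hn

lemma plFun_grid (ht0 : t 0 = 0) : ∀ j ≤ n, plFun n t ((j:ℝ)/n) = t j := by
  have hn' : (0:ℝ) < n := by exact_mod_cast hn
  intro j hj
  unfold plFun
  rw [← Finset.sum_range_add_sum_Ico _ hj]
  have h1 : ∑ i ∈ Finset.range j,
      (t (i+1) - t i) * ((n:ℝ) * (min (((i:ℝ)+1)/n) (max ((i:ℝ)/n) ((j:ℝ)/n)) - (i:ℝ)/n))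
      = t j - t 0 := by
    rw [← Finset.sum_range_sub (fun i => t i) j]
    apply Finset.sum_congr rfl
    intro i hi
    have hi' : i < j := Finset.mem_range.mp hi
    have hij : ((i:ℝ)+1) ≤ (j:ℝ) := by exact_mod_cast hi'
    have hmax : max ((i:ℝ)/n) ((j:ℝ)/n) = (j:ℝ)/n := max_eq_right (by gcongr)
    have hmin : min (((i:ℝ)+1)/n) ((j:ℝ)/n) = ((i:ℝ)+1)/n := min_eq_left (by gcongr)
    rw [hmax, hmin]
    have : (n:ℝ) * (((i:ℝ)+1)/n - (i:ℝ)/n) = 1 := by field_simp; ring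
    rw [this, mul_one]
  have h2 : ∑ i ∈ Finset.Ico j n,
      (t (i+1) - t i) * ((n:ℝ) * (min (((i:ℝ)+1)/n) (max ((i:ℝ)/n) ((j:ℝ)/n)) - (i:ℝ)/n))
      = 0 := by
    apply Finset.sum_eq_zero
    intro i hi
    have hji : j ≤ i := (Finset.mem_Ico.mp hi).1
    have hmax : max ((i:ℝ)/n) ((j:ℝ)/n) = (i:ℝ)/n := max_eq_left (by gcongr)
    have hmin : min (((i:ℝ)+1)/n) ((i:ℝ)/n) = (i:ℝ)/n := min_eq_right (by gcongr; linarith)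
    rw [hmax, hmin, sub_self, mul_zero, mul_zero]
  rw [h1, h2, ht0, add_zero, sub_zero]

include hmono

lemma plFun_mono : Monotone (plFun n t) := by
  intro u u' h
  apply Finset.sum_le_sum
  intro i hi
  have hslope : 0 ≤ t (i+1) - t i := by
    have := hmono i (Finset.mem_range.mp hi); linarith
  apply mul_le_mul_of_nonneg_left _ hslope
  gcongr

lemma plFun_strictMonoOn : StrictMonoOn (plFun n t) (Icc 0 1) := by
  have hn' : (0:ℝ) < n := by exact_mod_cast hn
  intro u hu u' hu' h
  apply Finset.sum_lt_sum
  · intro i hi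
    have hslope : 0 ≤ t (i+1) - t i := by
      have := hmono i (Finset.mem_range.mp hi); linarith
    apply mul_le_mul_of_nonneg_left _ hslope
    gcongr
  · set i := ⌊(n:ℝ) * u⌋₊ with hidef
    have hu1 : u < 1 := lt_of_lt_of_le h hu'.2
    have hnu : 0 ≤ (n:ℝ) * u := mul_nonneg hn'.le hu.1
    have hin : i < n := by
      rw [hidef, Nat.floor_lt hnu]
      nlinarith
    have hiu : (i:ℝ)/n ≤ u := by
      rw [div_le_iff₀ hn']
      have := Nat.floor_le hnu
      nlinarith
    have hui : u < ((i:ℝ)+1)/n := by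
      rw [lt_div_iff₀ hn']
      have := Nat.lt_floor_add_one ((n:ℝ) * u)
      nlinarith
    refine ⟨i, Finset.mem_range.mpr hin, ?_⟩
    have hslope : 0 < t (i+1) - t i := by
      have := hmono i hin; linarith
    have hmaxu : max ((i:ℝ)/n) u = u := max_eq_right hiu
    have hminu : min (((i:ℝ)+1)/n) u = u := min_eq_right hui.le
    have hmaxu' : max ((i:ℝ)/n) u' = u' := max_eq_right (le_trans hiu h.le)
    have hm : u < min (((i:ℝ)+1)/n) u' := lt_min hui h
    rw [hmaxu, hminu, hmaxu']
    have key : 0 < (t (i+1) - t i) * ((n:ℝ) * (min (((i:ℝ)+1)/n) u' - u)) := by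
      apply mul_pos hslope
      apply mul_pos hn'
      linarith
    nlinarith [key]

lemma plFun_bijOn (ht0 : t 0 = 0) (htn : t n = 1) :
    BijOn (plFun n t) (Icc 0 1) (Icc 0 1) := by
  have hn' : (0:ℝ) < n := by exact_mod_cast hn
  have pl0 : plFun n t 0 = 0 := by
    have := plFun_grid hn ht0 0 (Nat.zero_le n)
    rw [ht0] at this
    simpa using this
  have pl1 : plFun n t 1 = 1 := by
    have := plFun_grid hn ht0 n le_rfl
    rwa [div_self hn'.ne', htn] at this
  refine ⟨?_, (plFun_strictMonoOn hn hmono).injOn, ?_⟩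
  · intro u hu
    constructor
    · rw [← pl0]; exact plFun_mono hn hmono hu.1
    · rw [← pl1]; exact plFun_mono hn hmono hu.2
  · intro y hy
    have := intermediate_value_Icc (zero_le_one) (plFun_continuous (n := n) (t := t)).continuousOn
    rw [pl0, pl1] at this
    exact this hy

lemma plFun_mem (ht0 : t 0 = 0) {j : ℕ} (hj : j < n) {s : ℝ}
    (hs : s ∈ Ico ((j:ℝ)/n) (((j:ℝ)+1)/n)) :
    plFun n t s ∈ Ico (t j) (t (j+1)) := by
  have hn' : (0:ℝ) < n := by exact_mod_cast hn
  have hs0 : (0:ℝ) ≤ s := le_trans (by positivity) hs.1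
  have hj1n : ((j:ℝ)+1)/n ≤ 1 := by
    rw [div_le_one hn']; exact_mod_cast hj
  constructor
  · rw [← plFun_grid hn ht0 j hj.le]
    exact plFun_mono hn hmono hs.1
  · have hgrid : plFun n t (((j:ℝ)+1)/n) = t (j+1) := by
      have := plFun_grid hn ht0 (j+1) hj
      push_cast at this
      exact this
    rw [← hgrid]
    exact plFun_strictMonoOn hn hmono ⟨hs0, le_trans hs.2.le hj1n⟩
      ⟨by positivity, hj1n⟩ hs.2

end pl

variable {d : ℕ} {x : ℝ → EuclideanSpace ℝ (Fin d)}

/-- predicate: a good partition of `[0, b)` exists -/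
def GoodPart (x : ℝ → EuclideanSpace ℝ (Fin d)) (ε b : ℝ) : Prop :=
  ∃ n : ℕ, 0 < n ∧ ∃ t : ℕ → ℝ, t 0 = 0 ∧ t n = b ∧ (∀ j < n, t j < t (j+1)) ∧
    ∀ j < n, ∀ u ∈ Set.Ico (t j) (t (j+1)), ‖x u - x (t j)‖ ≤ ε

lemma goodPart_base {ε b : ℝ} (hb : 0 < b)
    (hosc : ∀ u ∈ Set.Ico (0:ℝ) b, ‖x u - x 0‖ ≤ ε) : GoodPart x ε b := by
  refine ⟨1, one_pos, fun j => if j = 0 then 0 else b, by simp, by simp, ?_, ?_⟩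
  · intro j hj
    interval_cases j
    simpa using hb
  · intro j hj
    interval_cases j
    simpa using hosc

lemma goodPart_ext {ε b e : ℝ} (hb : GoodPart x ε b) (hbe : b < e)
    (hosc : ∀ u ∈ Set.Ico b e, ‖x u - x b‖ ≤ ε) : GoodPart x ε e := by
  obtain ⟨n, hn, t, ht0, htn, hadj, hoscp⟩ := hb
  refine ⟨n + 1, Nat.succ_pos n, fun j => if j ≤ n then t j else e, ?_, ?_, ?_, ?_⟩
  · simp [Nat.zero_le, ht0]
  · simp
  · intro j hj
    rcases Nat.lt_or_ge j n with h | h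
    · simp only [if_pos h.le, if_pos (Nat.succ_le_of_lt h)]
      exact hadj j h
    · have hj' : j = n := le_antisymm (Nat.lt_succ_iff.mp hj) h
      subst hj'
      simp only [if_pos le_rfl, if_neg (by omega : ¬ j + 1 ≤ j), htn]
      exact hbe
  · intro j hj
    rcases Nat.lt_or_ge j n with h | h
    · simp only [if_pos h.le, if_pos (Nat.succ_le_of_lt h)]
      exact hoscp j h
    · have hj' : j = n := le_antisymm (Nat.lt_succ_iff.mp hj) h
      subst hj'
      simp only [if_pos le_rfl, if_neg (by omega : ¬ j + 1 ≤ j), htn]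
      exact hosc

lemma exists_partition (hx : Cadlag x) {ε : ℝ} (hε : 0 < ε) :
    ∃ n : ℕ, 0 < n ∧ ∃ t : ℕ → ℝ, t 0 = 0 ∧ t n = 1 ∧ (∀ j < n, t j < t (j+1)) ∧
      ∀ j < n, ∀ u ∈ Set.Ico (t j) (t (j+1)), ‖x u - x (t j)‖ ≤ ε := by
  set A : Set ℝ := {b | 0 < b ∧ b ≤ 1 ∧ GoodPart x ε b} with hA
  -- A is nonempty
  have hbase : ∃ b0, b0 ∈ A := by
    obtain ⟨δ, hδ, hδ'⟩ := Metric.tendsto_nhdsWithin_nhds.mp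
      (hx.1 0 ⟨le_refl 0, one_pos⟩) ε hε
    refine ⟨min 1 (δ/2), ⟨lt_min one_pos (by linarith), min_le_left _ _, ?_⟩⟩
    apply goodPart_base (lt_min one_pos (by linarith))
    intro u hu
    rcases eq_or_lt_of_le hu.1 with h | h
    · simp [← h]; positivity
    · have : dist u 0 < δ := by
        rw [Real.dist_eq, sub_zero, abs_of_pos h]
        have := lt_of_lt_of_le hu.2 (min_le_right 1 (δ/2))
        linarith
      have := hδ' (Set.mem_Ioi.mpr h) this
      rw [dist_eq_norm] at this
      exact this.le
  obtain ⟨b0, hb0⟩ := hbase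
  have hAne : A.Nonempty := ⟨b0, hb0⟩
  have hbdd : BddAbove A := ⟨1, fun b hb => hb.2.1⟩
  set c := sSup A with hc
  have hc1 : c ≤ 1 := csSup_le hAne (fun b hb => hb.2.1)
  have hc0 : 0 < c := lt_of_lt_of_le hb0.1 (le_csSup hbdd hb0)
  -- c ∈ A
  have hcA : c ∈ A := by
    obtain ⟨L, hL⟩ := hx.2 c ⟨hc0, hc1⟩
    obtain ⟨δ, hδ, hδ'⟩ := Metric.tendsto_nhdsWithin_nhds.mp hL (ε/2) (by linarith)
    obtain ⟨b, hbA, hbc⟩ := exists_lt_of_lt_csSup hAne (by linarith : c - δ < c)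
    have hble : b ≤ c := le_csSup hbdd hbA
    rcases eq_or_lt_of_le hble with h | h
    · rwa [← h]
    · refine ⟨hc0, hc1, goodPart_ext hbA.2.2 h ?_⟩
      intro u hu
      rcases eq_or_lt_of_le hu.1 with h' | h'
      · simp [← h']; positivity
      · have hub : dist u c < δ := by
          rw [Real.dist_eq, abs_of_neg (by linarith [hu.2] : u - c < 0)]
          have : b ≤ u := hu.1
          linarith [hu.2]
        have hbb : dist b c < δ := by
          rw [Real.dist_eq, abs_of_neg (by linarith : b - c < 0)]
          linarith
        have h1 := hδ' (Set.mem_Iio.mpr (lt_of_lt_of_le hu.2 le_rfl)) hub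
        have h2 := hδ' (Set.mem_Iio.mpr h) hbb
        rw [dist_eq_norm] at h1 h2
        calc ‖x u - x b‖ = ‖(x u - L) - (x b - L)‖ := by rw [sub_sub_sub_cancel_right]
          _ ≤ ‖x u - L‖ + ‖x b - L‖ := norm_sub_le _ _
          _ ≤ ε/2 + ε/2 := by linarith
          _ = ε := by ring
  -- c = 1
  have hceq : c = 1 := by
    by_contra hne
    have hclt : c < 1 := lt_of_le_of_ne hc1 hne
    obtain ⟨δ, hδ, hδ'⟩ := Metric.tendsto_nhdsWithin_nhds.mp
      (hx.1 c ⟨hc0.le, hclt⟩) ε hε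
    set e := min 1 (c + δ/2) with he
    have hce : c < e := lt_min hclt (by linarith)
    have heA : e ∈ A := by
      refine ⟨lt_trans hc0 hce, min_le_left _ _, goodPart_ext hcA.2.2 hce ?_⟩
      intro u hu
      rcases eq_or_lt_of_le hu.1 with h' | h'
      · simp [← h']; positivity
      · have : dist u c < δ := by
          rw [Real.dist_eq, abs_of_pos (by linarith : (0:ℝ) < u - c)]
          have := lt_of_lt_of_le hu.2 (min_le_right 1 (c + δ/2))
          linarith
        have := hδ' (Set.mem_Ioi.mpr h') this
        rw [dist_eq_norm] at this
        exact this.le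
    exact absurd (le_csSup hbdd heA) (not_le.mpr hce)
  rw [hceq] at hcA
  exact hcA.2.2


/-! ### Main theorem -/

/-- The quotient space `D̃` is separable: there is a countable set `S` of càdlàg
functions on `[0,1]` such that every càdlàg function is within `ε` of some element of `S`
in the pseudometric `d_{D̃}`, for every `ε > 0`. -/
theorem stmt11 (d : ℕ) :
    ∃ S : Set (ℝ → EuclideanSpace ℝ (Fin d)), S.Countable ∧ (∀ y ∈ S, Cadlag y) ∧
      ∀ x : ℝ → EuclideanSpace ℝ (Fin d), Cadlag x →
        ∀ ε > (0 : ℝ), ∃ y ∈ S, dTilde x y < ε := by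
  obtain ⟨Q, hQc, hQd⟩ := TopologicalSpace.exists_countable_dense (EuclideanSpace ℝ (Fin d))
  haveI : Countable ↥Q := hQc.to_subtype
  set g : List ↥Q × ↥Q → (ℝ → EuclideanSpace ℝ (Fin d)) := fun p =>
    stepFun (max 1 p.1.length) (fun j => (p.1.map Subtype.val).getD j 0) (p.2 : EuclideanSpace ℝ (Fin d))
    with hg
  refine ⟨Set.range g, Set.countable_range g, ?_, ?_⟩
  · rintro y ⟨p, rfl⟩
    exact stepFun_cadlag (lt_of_lt_of_le Nat.one_pos (le_max_left _ _)) _ _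
  · intro x hx ε hε
    obtain ⟨n, hn, t, ht0, htn, hadj, hosc⟩ := exists_partition hx
      (show (0:ℝ) < ε/4 by linarith)
    have hn' : (0:ℝ) < n := by exact_mod_cast hn
    have hpick : ∀ z : EuclideanSpace ℝ (Fin d), ∃ q, q ∈ Q ∧ dist z q < ε/4 := by
      intro z
      obtain ⟨q, hq⟩ := Metric.dense_iff.mp hQd z (ε/4) (by linarith)
      exact ⟨q, hq.2, by have := hq.1; rwa [Metric.mem_ball, dist_comm] at this⟩
    choose v hvQ hvd using fun j => hpick (x (t j))
    obtain ⟨w, hwQ, hwd⟩ := hpick (x 1)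
    set y := stepFun n v w with hy
    have hyS : y ∈ Set.range g := by
      refine ⟨(List.ofFn (fun i : Fin n => (⟨v i, hvQ i⟩ : ↥Q)), ⟨w, hwQ⟩), ?_⟩
      simp only [hg]
      rw [List.length_ofFn, max_eq_right hn, hy]
      apply stepFun_congr hn
      intro j hj
      have hlen : j < ((List.ofFn (fun i : Fin n => (⟨v i, hvQ i⟩ : ↥Q))).map
          Subtype.val).length := by
        simp [hj]
      rw [List.getD_eq_getElem _ _ hlen]
      simp
    set l := plFun n t with hl
    have hRep : Reparam l := ⟨plFun_continuous.continuousOn,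
      plFun_strictMonoOn hn hadj, plFun_bijOn hn hadj ht0 htn⟩
    have key : ∀ s ∈ Set.Icc (0:ℝ) 1, ‖(x ∘ l) s - y s‖ ≤ ε/2 := by
      intro s hs
      rcases eq_or_lt_of_le hs.2 with h1 | h1
      · -- s = 1
        have hl1 : l 1 = 1 := by
          have := plFun_grid hn ht0 n le_rfl
          rwa [div_self hn'.ne', htn] at this
        rw [h1]
        simp only [Function.comp_apply, hl1, hy, stepFun_one]
        rw [← dist_eq_norm]
        linarith
      · -- s < 1
        set j := ⌊(n:ℝ) * s⌋₊ with hj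
        have hns : 0 ≤ (n:ℝ) * s := mul_nonneg hn'.le hs.1
        have hjn : j < n := by
          rw [hj, Nat.floor_lt hns]
          nlinarith
        have hsmem : s ∈ Set.Ico ((j:ℝ)/n) (((j:ℝ)+1)/n) := by
          constructor
          · rw [div_le_iff₀ hn']
            have := Nat.floor_le hns
            nlinarith
          · rw [lt_div_iff₀ hn']
            have := Nat.lt_floor_add_one ((n:ℝ) * s)
            nlinarith
        have hys : y s = v j := stepFun_eval hn v w hjn hsmem
        have hls : l s ∈ Set.Ico (t j) (t (j+1)) := plFun_mem hn hadj ht0 hjn hsmem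
        have h2 : ‖x (l s) - x (t j)‖ ≤ ε/4 := hosc j hjn (l s) hls
        have h3 : ‖x (t j) - v j‖ < ε/4 := by
          rw [← dist_eq_norm]; exact hvd j
        calc ‖(x ∘ l) s - y s‖ = ‖(x (l s) - x (t j)) + (x (t j) - v j)‖ := by
              rw [hys]; simp [Function.comp_apply]
          _ ≤ ‖x (l s) - x (t j)‖ + ‖x (t j) - v j‖ := norm_add_le _ _
          _ ≤ ε/2 := by linarith
    have hud : unifDist (x ∘ l) y ≤ ε/2 := by
      apply Real.sSup_le
      · rintro c ⟨s, hs, rfl⟩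
        exact key s hs
      · linarith
    have hbddB : BddBelow {c : ℝ | ∃ l', Reparam l' ∧ c = unifDist (x ∘ l') y} := by
      refine ⟨0, ?_⟩
      rintro c ⟨l', _, rfl⟩
      apply Real.sSup_nonneg
      rintro _ ⟨s, hs, rfl⟩
      positivity
    have hdt : dTilde x y ≤ unifDist (x ∘ l) y := csInf_le hbddB ⟨l, hRep, rfl⟩
    exact ⟨y, hyS, by linarith⟩
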